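/- arXiv:1812.08320 — 3 statements merged into one kernel-verified Lean document; each statement's English description precedes it below -/
import Mathlib

section
/- Let θ ∈ ℝ, let f be a real polynomial, and let u₀ ∈ ℝ. If (D_θ f)(u₀) = 0, then (D_θ(X·f))(u₀) = θ·(D_θ f')(u₀). -/
/-- The linear operator `D_θ` on real polynomials:
`D_θ f = Σ_{k≥0} (θ/2)^k f^{(2k)} / k!` (a finite sum). -/
noncomputable def Dop (θ : ℝ) (f : Polynomial ℝ) : Polynomial ℝ :=
  ∑ k ∈ Finset.range (f.natDegree + 1),
    Polynomial.C ((θ/2)^k / (k.factorial : ℝ)) * (Polynomial.derivative^[2*k] f)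

open Polynomial Finset in
lemma Dop_eq (θ : ℝ) (f : Polynomial ℝ) (N : ℕ) (h : f.natDegree < N) :
    Dop θ f = ∑ k ∈ Finset.range N,
      Polynomial.C ((θ/2)^k / (k.factorial : ℝ)) * (Polynomial.derivative^[2*k] f) := by
  unfold Dop
  apply Finset.sum_subset (Finset.range_subset_range.2 h)
  intro k _ hk
  simp only [Finset.mem_range, not_lt] at hk
  rw [Polynomial.iterate_derivative_eq_zero (by omega), mul_zero]

open Polynomial in
lemma iterD_X_mul (f : Polynomial ℝ) (n : ℕ) :
    derivative^[n+1] (X * f) = (n+1 : ℕ) • derivative^[n] f + X * derivative^[n+1] f := by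
  induction n with
  | zero => simp [derivative_mul]
  | succ n ih =>
    rw [Function.iterate_succ_apply', ih]
    simp only [derivative_add, derivative_smul, derivative_mul, derivative_X, one_mul,
      ← Function.iterate_succ_apply']
    rw [succ_nsmul]
    ring

open Polynomial Finset in
/-- If `(D_θ f)(u₀) = 0`, then `(D_θ(X·f))(u₀) = θ·(D_θ f')(u₀)`. -/
theorem stmt9 (θ : ℝ) (f : Polynomial ℝ) (u₀ : ℝ)
    (h : (Dop θ f).eval u₀ = 0) :
    (Dop θ (Polynomial.X * f)).eval u₀
      = θ * (Dop θ (Polynomial.derivative f)).eval u₀ := by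
  set n := f.natDegree with hn
  have hXf : (X * f).natDegree < n + 2 :=
    lt_of_le_of_lt natDegree_mul_le (by simp only [natDegree_X, hn]; omega)
  have hf' : (derivative f).natDegree < n + 1 :=
    lt_of_le_of_lt (natDegree_derivative_le f) (by omega)
  rw [Dop_eq θ f (n+2) (by omega)] at h
  rw [Dop_eq θ (X*f) (n+2) hXf, Dop_eq θ (derivative f) (n+1) hf']
  simp only [eval_finset_sum, eval_mul, eval_C] at h ⊢
  set A : ℕ → ℝ := fun k => (derivative^[2*k] f).eval u₀ with hA
  set B : ℕ → ℝ := fun k => (derivative^[2*k-1] f).eval u₀ with hB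
  have key : ∀ k, (derivative^[2*k] (X*f)).eval u₀ = u₀ * A k + (2*k : ℝ) * B k := by
    intro k
    cases k with
    | zero => simp [hA, mul_comm]
    | succ j =>
      have h2 : 2 * (j+1) = (2*j+1) + 1 := by omega
      rw [h2, iterD_X_mul]
      simp only [eval_add, eval_smul, eval_mul, eval_X, smul_eq_mul, hA, hB]
      have : 2 * (j+1) - 1 = 2*j+1 := by omega
      rw [this]
      push_cast [h2]
      ring
  have split : ∑ k ∈ Finset.range (n+2), (θ/2)^k / (k.factorial : ℝ) *
      (derivative^[2*k] (X*f)).eval u₀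
      = u₀ * (∑ k ∈ Finset.range (n+2), (θ/2)^k / (k.factorial : ℝ) * A k)
        + ∑ k ∈ Finset.range (n+2), (θ/2)^k / (k.factorial : ℝ) * ((2*k : ℝ) * B k) := by
    rw [Finset.mul_sum, ← Finset.sum_add_distrib]
    refine Finset.sum_congr rfl fun k _ => ?_
    rw [key k]; ring
  rw [split, h, mul_zero, zero_add]
  rw [Finset.sum_range_succ']
  simp only [Nat.cast_zero, mul_zero, zero_mul, mul_zero, add_zero, pow_zero]
  rw [Finset.mul_sum]
  refine Finset.sum_congr rfl fun j _ => ?_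
  have hBj : B (j+1) = (derivative^[2*j] (derivative f)).eval u₀ := by
    have : 2 * (j+1) - 1 = 2*j + 1 := by omega
    rw [hB]; simp only [this]
    rw [Function.iterate_succ_apply]
  rw [hBj]
  have hfact : ((j+1).factorial : ℝ) = (j+1) * (j.factorial : ℝ) := by
    push_cast [Nat.factorial_succ]; ring
  rw [hfact]
  have h1 : (j.factorial : ℝ) ≠ 0 := Nat.cast_ne_zero.2 (Nat.factorial_ne_zero j)
  have h2 : ((j:ℝ)+1) ≠ 0 := by positivity
  field_simp
  push_cast
  ring
end

section
/- Let g be a monic real-rooted polynomial of degree n ≥ 1 (g has n real roots counted with multiplicity), and let θ > 0. Then the polynomial c := D_{−θ} g = Σ_{k≥0} (−θ/2)^k g^{(2k)}/k! has exactly n distinct real roots. (This is the core of the strict hyperbolicity of the Gaussian-EQMOM moment system, whose characteristic polynomial is c = D_{−σ²} g with g = (X−u_1)²⋯(X−u_N)²(X−Ũ) and σ² > 0.) -/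
open Polynomial Finset Filter

private lemma dop_eq_sum (θ : ℝ) (f : Polynomial ℝ) {N : ℕ} (hN : f.natDegree + 1 ≤ N) :
    Dop θ f = ∑ k ∈ Finset.range N,
      C ((θ/2)^k / (k.factorial : ℝ)) * (derivative^[2*k] f) := by
  rw [Dop]
  refine Finset.sum_subset (Finset.range_subset_range.2 hN) ?_
  intro x hx hx'
  have h2 : f.natDegree < 2 * x := by
    simp only [Finset.mem_range, not_lt] at hx'
    omega
  rw [Polynomial.iterate_derivative_eq_zero h2, mul_zero]

private lemma iter_deriv_mul (a : ℝ) (p : Polynomial ℝ) (n : ℕ) :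
    derivative^[n+1] ((X - C a) * p)
      = (X - C a) * derivative^[n+1] p + C ((n+1 : ℕ) : ℝ) * derivative^[n] p := by
  induction n with
  | zero => simp [derivative_mul]; ring
  | succ n ih =>
    have e1 : derivative^[n+1+1] ((X - C a) * p)
        = derivative (derivative^[n+1] ((X - C a) * p)) :=
      Function.iterate_succ_apply' _ _ _
    have e2 : derivative (derivative^[n+1] p) = derivative^[n+1+1] p :=
      (Function.iterate_succ_apply' _ _ _).symm
    have e3 : derivative (derivative^[n] p) = derivative^[n+1] p :=
      (Function.iterate_succ_apply' _ _ _).symm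
    rw [e1, ih, derivative_add, derivative_mul, derivative_mul, derivative_C,
      derivative_sub, derivative_X, derivative_C, e2, e3,
      show (C ((n+1+1 : ℕ) : ℝ)) = C ((n+1:ℕ):ℝ) + 1 by push_cast; rw [map_add, map_one]]
    ring

private lemma iter_deriv_mul2 (a : ℝ) (p : Polynomial ℝ) (k : ℕ) :
    derivative^[2*k] ((X - C a) * p)
      = (X - C a) * derivative^[2*k] p + C ((2*k : ℕ) : ℝ) * derivative^[2*k-1] p := by
  cases k with
  | zero => simp
  | succ k =>
    have h1 : 2 * (k+1) = (2*k+1) + 1 := by ring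
    have h2 : 2 * (k+1) - 1 = 2*k+1 := by omega
    rw [h2, h1, iter_deriv_mul]

private lemma Dop_linear (θ a : ℝ) (p : Polynomial ℝ) (hp : p ≠ 0) :
    Dop θ ((X - C a) * p)
      = (X - C a) * Dop θ p + C θ * derivative (Dop θ p) := by
  set d := p.natDegree with hd
  have hdeg : ((X - C a) * p).natDegree = d + 1 := by
    rw [natDegree_mul (X_sub_C_ne_zero a) hp, natDegree_X_sub_C]; ring
  rw [dop_eq_sum θ ((X - C a) * p) (N := d + 2) (by rw [hdeg])]
  have expand : ∀ k ∈ Finset.range (d+2),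
      C ((θ/2)^k / (k.factorial : ℝ)) * (derivative^[2*k] ((X - C a) * p))
      = (X - C a) * (C ((θ/2)^k / (k.factorial : ℝ)) * derivative^[2*k] p)
        + C ((θ/2)^k / (k.factorial : ℝ) * ((2*k : ℕ) : ℝ)) * derivative^[2*k-1] p := by
    intro k _
    rw [iter_deriv_mul2, map_mul]
    ring
  rw [Finset.sum_congr rfl expand, Finset.sum_add_distrib]
  have e1 : ∑ k ∈ Finset.range (d+2),
      (X - C a) * (C ((θ/2)^k / (k.factorial : ℝ)) * derivative^[2*k] p)
      = (X - C a) * Dop θ p := by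
    rw [← Finset.mul_sum, ← dop_eq_sum θ p (by omega)]
  have e2 : ∑ k ∈ Finset.range (d+2),
      C ((θ/2)^k / (k.factorial : ℝ) * ((2*k : ℕ) : ℝ)) * derivative^[2*k-1] p
      = C θ * derivative (Dop θ p) := by
    rw [Finset.sum_range_succ']
    have f0 : C ((θ/2)^0 / ((0:ℕ).factorial : ℝ) * ((2*0 : ℕ) : ℝ)) * derivative^[2*0-1] p = 0 := by
      norm_num
    rw [f0, add_zero, Dop, derivative_sum, Finset.mul_sum]
    refine Finset.sum_congr rfl ?_
    intro i _
    have h1 : 2*(i+1)-1 = 2*i+1 := by omega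
    have h2 : derivative (derivative^[2*i] p) = derivative^[2*i+1] p :=
      (Function.iterate_succ_apply' _ _ _).symm
    rw [h1, derivative_C_mul, h2, ← mul_assoc, ← map_mul]
    congr 1
    have hfac : ((i+1).factorial : ℝ) = ((i:ℝ)+1) * (i.factorial : ℝ) := by
      rw [Nat.factorial_succ]; push_cast; ring
    have hne : (i.factorial : ℝ) ≠ 0 := by
      exact_mod_cast (Nat.factorial_ne_zero i)
    have hne2 : ((i:ℝ)+1) ≠ 0 := by positivity
    congr 1
    rw [hfac]
    push_cast
    field_simp
    ring
  rw [e1, e2]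

private lemma Dop_one (θ : ℝ) : Dop θ (1 : Polynomial ℝ) = 1 := by
  rw [Dop]
  simp

private lemma exists_root_between {p : Polynomial ℝ} {a b : ℝ} (hab : a < b)
    (h : p.eval a * p.eval b < 0) :
    ∃ c ∈ Set.Ioo a b, p.eval c = 0 := by
  have hc : ContinuousOn (fun x => p.eval x) (Set.Icc a b) :=
    p.continuous_aeval.continuousOn
  rcases mul_neg_iff.1 h with ⟨ha, hb⟩ | ⟨ha, hb⟩
  · have h0 : (0:ℝ) ∈ Set.Ioo (p.eval b) (p.eval a) := ⟨hb, ha⟩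
    obtain ⟨c, hc1, hc2⟩ := intermediate_value_Ioo' hab.le hc h0
    exact ⟨c, hc1, hc2⟩
  · have h0 : (0:ℝ) ∈ Set.Ioo (p.eval a) (p.eval b) := ⟨ha, hb⟩
    obtain ⟨c, hc1, hc2⟩ := intermediate_value_Ioo hab.le hc h0
    exact ⟨c, hc1, hc2⟩

private lemma sign_pair {e e' : ℕ} (he : e = e' + 1) {x y : ℝ}
    (hx : 0 < (-1:ℝ)^(e+1) * x) (hy : 0 < (-1:ℝ)^(e'+1) * y) : x * y < 0 := by
  have hm := mul_pos hx hy
  have hre : ((-1:ℝ)^(e+1) * x) * ((-1:ℝ)^(e'+1) * y) = (-1:ℝ)^(e+1+(e'+1)) * (x*y) := by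
    rw [pow_add]; ring
  rw [hre, he, (Nat.odd_iff.2 (by omega) : Odd (e'+1+1+(e'+1))).neg_one_pow] at hm
  linarith


private lemma stepFin (θ a : ℝ) (hθ : 0 < θ) (m : ℕ) (σ : Fin m → ℝ) (hσ : StrictMono σ) :
    ∃ T : Finset ℝ, T.card = m + 1 ∧
      (X - C a) * (∏ i, (X - C (σ i))) - C θ * derivative (∏ i, (X - C (σ i)))
        = ∏ t ∈ T, (X - C t) := by
  classical
  rcases Nat.eq_zero_or_pos m with rfl | hm
  · exact ⟨{a}, by simp, by simp⟩
  · set f : Polynomial ℝ := ∏ i, (X - C (σ i)) with hf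
    set h : Polynomial ℝ := (X - C a) * f - C θ * derivative f with hh
    have hfm : f.Monic := monic_prod_of_monic _ _ (fun i _ => monic_X_sub_C _)
    have hfd : f.natDegree = m := by
      rw [hf, natDegree_prod _ _ (fun i _ => X_sub_C_ne_zero _)]
      simp [natDegree_X_sub_C]
    have hPm : ((X - C a) * f).Monic := (monic_X_sub_C a).mul hfm
    have hPd : ((X - C a) * f).natDegree = m + 1 := by
      rw [natDegree_mul (X_sub_C_ne_zero a) hfm.ne_zero, natDegree_X_sub_C, hfd]; omega
    have hlt : (C θ * derivative f).degree < ((X - C a) * f).degree := by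
      have h1 : (C θ * derivative f).degree ≤ (derivative f).degree := by
        rw [← smul_eq_C_mul]
        exact degree_smul_le _ _
      have h2 : (derivative f).degree < f.degree := degree_derivative_lt hfm.ne_zero
      have h3 : f.degree ≤ ((X - C a) * f).degree := by
        rw [degree_eq_natDegree hfm.ne_zero, degree_eq_natDegree hPm.ne_zero, hPd, hfd]
        exact_mod_cast Nat.le_succ m
      exact lt_of_le_of_lt h1 (lt_of_lt_of_le h2 h3)
    have hhm : h.Monic := by
      rw [hh, sub_eq_add_neg]
      exact hPm.add_of_left (by rw [degree_neg]; exact hlt)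
    have hhd : h.natDegree = m + 1 := by
      rw [hh, natDegree_eq_of_degree_eq (degree_sub_eq_left_of_degree_lt hlt), hPd]
    have hfeval : ∀ j : Fin m, f.eval (σ j) = 0 := by
      intro j
      rw [hf]
      rw [eval_prod]
      exact Finset.prod_eq_zero (Finset.mem_univ j) (by simp)
    have hderiv_eval : ∀ j : Fin m,
        (derivative f).eval (σ j) = ∏ i ∈ Finset.univ.erase j, (σ j - σ i) := by
      intro j
      have hq : f = (X - C (σ j)) * ∏ i ∈ Finset.univ.erase j, (X - C (σ i)) :=
        (Finset.mul_prod_erase _ _ (Finset.mem_univ j)).symm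
      rw [hq, derivative_mul, derivative_sub, derivative_X, derivative_C, sub_zero, one_mul]
      simp [eval_prod]
    have hkey : ∀ j : Fin m, 0 < (-1:ℝ)^((m - 1 - (j:ℕ)) + 1) * h.eval (σ j) := by
      intro j
      have hsplit : Finset.univ.erase j = Finset.Iio j ∪ Finset.Ioi j := by
        ext i
        simp only [Finset.mem_erase, Finset.mem_univ, and_true, Finset.mem_union,
          Finset.mem_Iio, Finset.mem_Ioi]
        exact ne_iff_lt_or_gt
      have hdisj : Disjoint (Finset.Iio j) (Finset.Ioi j) := by
        rw [Finset.disjoint_left]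
        intro i hi hi'
        exact absurd (Finset.mem_Ioi.1 hi') (not_lt.2 (Finset.mem_Iio.1 hi).le)
      have hIio : 0 < ∏ i ∈ Finset.Iio j, (σ j - σ i) :=
        Finset.prod_pos (fun i hi => sub_pos.2 (hσ (Finset.mem_Iio.1 hi)))
      have hIoi_pos : 0 < ∏ i ∈ Finset.Ioi j, (σ i - σ j) :=
        Finset.prod_pos (fun i hi => sub_pos.2 (hσ (Finset.mem_Ioi.1 hi)))
      have hIoi : ∏ i ∈ Finset.Ioi j, (σ j - σ i)
          = (-1:ℝ)^((m - 1 - (j:ℕ))) * ∏ i ∈ Finset.Ioi j, (σ i - σ j) := by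
        rw [← Fin.card_Ioi j, ← Finset.prod_const, ← Finset.prod_mul_distrib]
        exact Finset.prod_congr rfl (fun i _ => by ring)
      have heval : h.eval (σ j)
          = -θ * ((-1:ℝ)^((m - 1 - (j:ℕ)))
              * ((∏ i ∈ Finset.Iio j, (σ j - σ i)) * ∏ i ∈ Finset.Ioi j, (σ i - σ j))) := by
        rw [hh, eval_sub, eval_mul, eval_mul, eval_C, hfeval j, mul_zero, zero_sub,
          hderiv_eval j, hsplit, Finset.prod_union hdisj, hIoi]
        ring
      rw [heval, pow_succ]
      have hsq : ((-1:ℝ)^((m - 1 - (j:ℕ))))^2 = 1 := by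
        rw [← pow_mul, mul_comm, pow_mul, neg_one_sq, one_pow]
      have : (-1:ℝ)^((m - 1 - (j:ℕ))) * -1 * (-θ * ((-1:ℝ)^((m - 1 - (j:ℕ)))
          * ((∏ i ∈ Finset.Iio j, (σ j - σ i)) * ∏ i ∈ Finset.Ioi j, (σ i - σ j))))
          = ((-1:ℝ)^((m - 1 - (j:ℕ))))^2
              * (θ * ((∏ i ∈ Finset.Iio j, (σ j - σ i)) * ∏ i ∈ Finset.Ioi j, (σ i - σ j))) := by
        ring
      rw [this, hsq, one_mul]
      positivity

    -- middle roots
    have lt2 : ∀ i : Fin (m-1), (i:ℕ)+1 < m := fun i => by have := i.isLt; omega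
    have lt1 : ∀ i : Fin (m-1), (i:ℕ) < m := fun i => by have := lt2 i; omega
    have hmid : ∀ i : Fin (m-1),
        ∃ c ∈ Set.Ioo (σ ⟨(i:ℕ), lt1 i⟩) (σ ⟨(i:ℕ)+1, lt2 i⟩), h.eval c = 0 := by
      intro i
      have hk1 := hkey ⟨(i:ℕ), lt1 i⟩
      have hk2 := hkey ⟨(i:ℕ)+1, lt2 i⟩
      have he : m - 1 - ((⟨(i:ℕ), lt1 i⟩ : Fin m):ℕ)
          = (m - 1 - ((⟨(i:ℕ)+1, lt2 i⟩ : Fin m):ℕ)) + 1 := by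
        show m - 1 - (i:ℕ) = (m - 1 - ((i:ℕ)+1)) + 1
        have := lt2 i; omega
      have hneg := sign_pair he hk1 hk2
      have hlt : σ ⟨(i:ℕ), lt1 i⟩ < σ ⟨(i:ℕ)+1, lt2 i⟩ := hσ (by simp [Fin.lt_def])
      exact exists_root_between hlt hneg
    have hm' : m - 1 < m := by omega
    have htop : ∃ c, σ ⟨m-1, hm'⟩ < c ∧ h.eval c = 0 := by
      have hneg : h.eval (σ ⟨m-1, hm'⟩) < 0 := by
        have hk := hkey ⟨m-1, hm'⟩
        have he : m - 1 - ((⟨m-1, hm'⟩ : Fin m) : ℕ) + 1 = 1 := by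
          show m - 1 - (m-1) + 1 = 1; omega
        rw [he, pow_one] at hk
        linarith
      have hdegpos : 0 < h.degree := natDegree_pos_iff_degree_pos.1 (by omega)
      have ht : Tendsto (fun x => h.eval x) atTop atTop :=
        h.tendsto_atTop_of_leadingCoeff_nonneg hdegpos (by rw [hhm.leadingCoeff]; norm_num)
      obtain ⟨b, hb1, hb2⟩ :=
        ((ht.eventually_gt_atTop 0).and (eventually_gt_atTop (σ ⟨m-1,hm'⟩))).exists
      obtain ⟨c, hc1, hc2⟩ := exists_root_between hb2 (mul_neg_of_neg_of_pos hneg hb1)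
      exact ⟨c, hc1.1, hc2⟩
    have h0m : (0:ℕ) < m := hm
    have hbot : ∃ c, c < σ ⟨0, h0m⟩ ∧ h.eval c = 0 := by
      have hk : 0 < (-1:ℝ)^m * h.eval (σ ⟨0, h0m⟩) := by
        have hk0 := hkey ⟨0, h0m⟩
        have he : m - 1 - ((⟨0, h0m⟩ : Fin m) : ℕ) + 1 = m := by
          show m-1-0+1 = m; omega
        rwa [he] at hk0
      set p : Polynomial ℝ := C ((-1:ℝ)^(m+1)) * (h.comp (-X)) with hp
      have hlc : p.leadingCoeff = 1 := by
        rw [hp, leadingCoeff_mul, leadingCoeff_C,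
          leadingCoeff_comp (by rw [natDegree_neg, natDegree_X]; exact one_ne_zero),
          hhm.leadingCoeff, leadingCoeff_neg, leadingCoeff_X, hhd, one_mul, ← pow_add]
        exact Even.neg_one_pow (Nat.even_iff.2 (by omega))
      have hpd : p.natDegree = m+1 := by
        rw [hp, natDegree_C_mul (pow_ne_zero _ (by norm_num : (-1:ℝ) ≠ 0)),
          natDegree_comp, natDegree_neg, natDegree_X, hhd, mul_one]
      have hdegpos : 0 < p.degree := natDegree_pos_iff_degree_pos.1 (by omega)
      have ht : Tendsto (fun x => p.eval x) atTop atTop :=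
        p.tendsto_atTop_of_leadingCoeff_nonneg hdegpos (by rw [hlc]; norm_num)
      obtain ⟨x0, hx1, hx2⟩ :=
        ((ht.eventually_gt_atTop 0).and (eventually_gt_atTop (-(σ ⟨0, h0m⟩)))).exists
      have hz : -x0 < σ ⟨0, h0m⟩ := by linarith
      have heval : p.eval x0 = (-1:ℝ)^(m+1) * h.eval (-x0) := by
        rw [hp]; simp [eval_comp]
      rw [heval] at hx1
      have hmul : h.eval (-x0) * h.eval (σ ⟨0, h0m⟩) < 0 := by
        have hprod := mul_pos hx1 hk
        have hre : ((-1:ℝ)^(m+1) * h.eval (-x0)) * ((-1:ℝ)^m * h.eval (σ ⟨0,h0m⟩))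
            = (-1:ℝ)^(m+1+m) * (h.eval (-x0) * h.eval (σ ⟨0,h0m⟩)) := by
          rw [pow_add]; ring
        rw [hre, (Nat.odd_iff.2 (by omega) : Odd (m+1+m)).neg_one_pow] at hprod
        linarith
      obtain ⟨c, hc1, hc2⟩ := exists_root_between hz hmul
      exact ⟨c, hc1.2, hc2⟩

    choose cmid hcmid_mem hcmid_root using hmid
    obtain ⟨ctop, hctop_lt, hctop_root⟩ := htop
    obtain ⟨c0, hc0_lt, hc0_root⟩ := hbot
    have hcm_lt : ∀ i i' : Fin (m-1), (i:ℕ) < (i':ℕ) → cmid i < cmid i' := by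
      intro i i' hii
      have h1 : cmid i < σ ⟨(i:ℕ)+1, lt2 i⟩ := (hcmid_mem i).2
      have h2 : σ ⟨(i':ℕ), lt1 i'⟩ < cmid i' := (hcmid_mem i').1
      have h3 : σ ⟨(i:ℕ)+1, lt2 i⟩ ≤ σ ⟨(i':ℕ), lt1 i'⟩ :=
        hσ.monotone (by simp only [Fin.le_def]; omega)
      linarith
    have hinj : Function.Injective cmid := by
      intro i i' hEq
      rcases lt_trichotomy (i:ℕ) (i':ℕ) with hlt | heq | hgt
      · exact absurd hEq (ne_of_lt (hcm_lt _ _ hlt))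
      · exact Fin.ext heq
      · exact absurd hEq.symm (ne_of_lt (hcm_lt _ _ hgt))
    have hcm_gt0 : ∀ i : Fin (m-1), c0 < cmid i := by
      intro i
      have h1 : σ ⟨0, h0m⟩ ≤ σ ⟨(i:ℕ), lt1 i⟩ := hσ.monotone (by simp [Fin.le_def])
      have h2 := (hcmid_mem i).1
      linarith
    have hcm_lt_top : ∀ i : Fin (m-1), cmid i < ctop := by
      intro i
      have h1 : σ ⟨(i:ℕ)+1, lt2 i⟩ ≤ σ ⟨m-1, hm'⟩ :=
        hσ.monotone (by simp only [Fin.le_def]; have := i.isLt; omega)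
      have h2 := (hcmid_mem i).2
      linarith
    have hc0top : c0 < ctop := by
      have h1 : σ ⟨0, h0m⟩ ≤ σ ⟨m-1, hm'⟩ := hσ.monotone (by simp [Fin.le_def])
      linarith
    set R : Finset ℝ := insert c0 (insert ctop (Finset.image cmid Finset.univ)) with hR
    have hnm1 : ctop ∉ Finset.image cmid Finset.univ := by
      simp only [Finset.mem_image, Finset.mem_univ, true_and, not_exists]
      intro i hEq
      exact absurd hEq (ne_of_lt (hcm_lt_top i))
    have hnm2 : c0 ∉ insert ctop (Finset.image cmid Finset.univ) := by
      simp only [Finset.mem_insert, Finset.mem_image, Finset.mem_univ, true_and, not_or, not_exists]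
      constructor
      · exact ne_of_lt hc0top
      · intro i hEq
        exact absurd hEq.symm (ne_of_lt (hcm_gt0 i))
    have hcard : R.card = m + 1 := by
      rw [hR, Finset.card_insert_of_notMem hnm2, Finset.card_insert_of_notMem hnm1,
        Finset.card_image_of_injective _ hinj, Finset.card_univ, Fintype.card_fin]
      omega
    have hRroots : ∀ t ∈ R, h.eval t = 0 := by
      intro t ht
      rw [hR] at ht
      simp only [Finset.mem_insert, Finset.mem_image, Finset.mem_univ, true_and] at ht
      rcases ht with rfl | rfl | ⟨i, rfl⟩
      · exact hc0_root
      · exact hctop_root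
      · exact hcmid_root i
    have hne0 : h ≠ 0 := hhm.ne_zero
    have hsub : R.val ≤ h.roots := by
      rw [Multiset.le_iff_count]
      intro t
      by_cases htR : t ∈ R
      · have h1 : R.val.count t = 1 := Multiset.count_eq_one_of_mem R.nodup htR
        rw [h1]
        exact (Multiset.one_le_count_iff_mem).2
          ((Polynomial.mem_roots hne0).2 (hRroots t htR))
      · rw [Multiset.count_eq_zero_of_notMem htR]
        exact Nat.zero_le _
    have hcard_le : Multiset.card h.roots ≤ m + 1 := by
      have hcr := h.card_roots'
      rw [hhd] at hcr
      exact hcr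
    have hRcard_val : Multiset.card R.val = m + 1 := hcard
    have hroots_eq : R.val = h.roots :=
      Multiset.eq_of_le_of_card_le hsub (by rw [hRcard_val]; exact hcard_le)
    have hfinal : h = ∏ t ∈ R, (X - C t) := by
      have hcards : Multiset.card h.roots = h.natDegree := by
        rw [← hroots_eq, hRcard_val, hhd]
      have hfac := prod_multiset_X_sub_C_of_monic_of_roots_card_eq hhm hcards
      rw [← hfac, ← hroots_eq]
      rfl
    exact ⟨R, hcard, hfinal⟩

private lemma stepS (θ a : ℝ) (hθ : 0 < θ) (S : Finset ℝ) :
    ∃ T : Finset ℝ, T.card = S.card + 1 ∧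
      (X - C a) * (∏ s ∈ S, (X - C s)) - C θ * derivative (∏ s ∈ S, (X - C s))
        = ∏ t ∈ T, (X - C t) := by
  classical
  set σ : Fin S.card → ℝ := fun i => ((S.orderIsoOfFin rfl i : ℝ)) with hσdef
  have hσ : StrictMono σ := fun i j hij => by
    exact_mod_cast (S.orderIsoOfFin rfl).strictMono hij
  have hset : S = Finset.image σ Finset.univ := by
    ext s
    simp only [Finset.mem_image, Finset.mem_univ, true_and]
    constructor
    · intro hs
      refine ⟨(S.orderIsoOfFin rfl).symm ⟨s, hs⟩, ?_⟩
      show ((S.orderIsoOfFin rfl) ((S.orderIsoOfFin rfl).symm ⟨s, hs⟩) : ℝ) = s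
      rw [OrderIso.apply_symm_apply]
    · rintro ⟨i, rfl⟩
      exact (S.orderIsoOfFin rfl i).2
  have hprod : ∏ s ∈ S, (X - C s) = ∏ i, (X - C (σ i)) := by
    conv_lhs => rw [hset]
    rw [Finset.prod_image (fun i _ j _ hEq => hσ.injective hEq)]
  rw [hprod]
  exact stepFin θ a hθ S.card σ hσ

private lemma mainM (θ : ℝ) (hθ : 0 < θ) (M : Multiset ℝ) :
    ∃ T : Finset ℝ, T.card = Multiset.card M ∧
      Dop (-θ) ((M.map (fun r => X - C r)).prod) = ∏ t ∈ T, (X - C t) := by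
  classical
  induction M using Multiset.induction_on with
  | empty => exact ⟨∅, by simp, by simp [Dop_one]⟩
  | cons a M ih =>
    obtain ⟨S, hScard, hSprod⟩ := ih
    have hP : ((M.map (fun r => X - C r)).prod).Monic :=
      monic_multiset_prod_of_monic _ _ (fun r _ => monic_X_sub_C r)
    have hstep := Dop_linear (-θ) a _ hP.ne_zero
    rw [Multiset.map_cons, Multiset.prod_cons, hstep, hSprod]
    obtain ⟨T, hT1, hT2⟩ := stepS θ a hθ S
    refine ⟨T, by rw [hT1, hScard, Multiset.card_cons], ?_⟩
    rw [← hT2, map_neg, neg_mul, ← sub_eq_add_neg]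

/-- Strict hyperbolicity core: if `g` is monic, real-rooted of degree `n ≥ 1`
(it has `n` real roots counted with multiplicity) and `θ > 0`, then
`c = D_{−θ} g` has exactly `n` distinct real roots. -/
theorem stmt12 (g : Polynomial ℝ) (hmonic : g.Monic) (hn : 1 ≤ g.natDegree)
    (hroots : (g.roots).card = g.natDegree) (θ : ℝ) (hθ : 0 < θ) :
    {x : ℝ | (Dop (-θ) g).eval x = 0}.ncard = g.natDegree := by
  classical
  have hrepr := prod_multiset_X_sub_C_of_monic_of_roots_card_eq hmonic hroots
  obtain ⟨T, hT1, hT2⟩ := mainM θ hθ g.roots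
  rw [hrepr] at hT2
  rw [hT2]
  have hzero : {x : ℝ | (∏ t ∈ T, (X - C t)).eval x = 0} = ↑T := by
    ext x
    simp [eval_prod, Finset.prod_eq_zero_iff, sub_eq_zero, eq_comm]
  rw [hzero, Set.ncard_coe_finset, hT1, hroots]
end

section
/- Let N ≥ 1, θ ∈ ℝ, U ∈ ℝ, and set c := D_{−θ}((X − U)^{2N+1}). Then for all integers k, j ≥ 0 with k + j ≤ 2N, the polynomial D_θ(X^k · c^{(j)}) vanishes at U, i.e. (D_θ(X^k · c^{(j)}))(U) = 0, where c^{(j)} denotes the j-th derivative of c. -/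
open Polynomial Finset

noncomputable def Dn (n : ℕ) (θ : ℝ) (f : Polynomial ℝ) : Polynomial ℝ :=
  ∑ k ∈ Finset.range n, C ((θ/2)^k / (k.factorial : ℝ)) * (derivative^[2*k] f)

lemma Dop_eq_Dn {n : ℕ} (θ : ℝ) (f : Polynomial ℝ) (hn : f.natDegree + 1 ≤ n) :
    Dop θ f = Dn n θ f := by
  refine Finset.sum_subset (Finset.range_subset_range.2 hn) (fun k _ hk => ?_)
  rw [Finset.mem_range, not_lt] at hk
  rw [Polynomial.iterate_derivative_eq_zero, mul_zero]
  omega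

lemma Dn_natDegree_le (n : ℕ) (θ : ℝ) (f : Polynomial ℝ) :
    (Dn n θ f).natDegree ≤ f.natDegree := by
  refine Polynomial.natDegree_sum_le_of_forall_le _ _ (fun k _ => ?_)
  calc (C ((θ/2)^k / (k.factorial : ℝ)) * (derivative^[2*k] f)).natDegree
      ≤ (derivative^[2*k] f).natDegree := natDegree_C_mul_le _ _
    _ ≤ f.natDegree := (natDegree_iterate_derivative f _).trans (by omega)

lemma derivative_Dn (n : ℕ) (θ : ℝ) (f : Polynomial ℝ) :
    derivative (Dn n θ f) = Dn n θ (derivative f) := by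
  unfold Dn
  rw [map_sum]
  refine Finset.sum_congr rfl (fun k _ => ?_)
  rw [derivative_C_mul, ← Function.iterate_succ_apply' derivative,
    ← Function.iterate_succ_apply derivative]

lemma derivative_Dop (θ : ℝ) (f : Polynomial ℝ) :
    derivative (Dop θ f) = Dop θ (derivative f) := by
  rw [Dop_eq_Dn (n := f.natDegree + 1) θ f (le_refl _), derivative_Dn,
    ← Dop_eq_Dn (n := f.natDegree + 1) θ (derivative f)
      (by have := f.natDegree_derivative_le; omega)]

lemma iterate_derivative_Dop (θ : ℝ) (f : Polynomial ℝ) (j : ℕ) :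
    derivative^[j] (Dop θ f) = Dop θ (derivative^[j] f) := by
  induction j generalizing f with
  | zero => rfl
  | succ j ih =>
    rw [Function.iterate_succ_apply, derivative_Dop, ih, Function.iterate_succ_apply]

lemma iterate_derivative_X_mul' (f : Polynomial ℝ) (m : ℕ) :
    derivative^[m+1] (X * f) =
      X * derivative^[m+1] f + C ((m+1 : ℕ) : ℝ) * derivative^[m] f := by
  induction m with
  | zero =>
    simp [derivative_mul]
    ring
  | succ m ih =>
    have h1 : derivative^[m+1+1] (X * f) = derivative (derivative^[m+1] (X * f)) :=
      Function.iterate_succ_apply' derivative (m+1) (X * f)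
    have h2 : derivative (derivative^[m+1] f) = derivative^[m+1+1] f :=
      (Function.iterate_succ_apply' derivative (m+1) f).symm
    have h3 : derivative (derivative^[m] f) = derivative^[m+1] f :=
      (Function.iterate_succ_apply' derivative m f).symm
    rw [h1, ih, derivative_add, derivative_mul, derivative_X, derivative_C_mul, h2, h3]
    have h4 : ((m+1+1 : ℕ) : ℝ) = ((m+1:ℕ):ℝ) + 1 := by push_cast; ring
    rw [h4, C_add, C_1]
    ring

lemma Dn_X_mul (n : ℕ) (θ : ℝ) (f : Polynomial ℝ) :
    Dn (n+1) θ (X * f) = X * Dn (n+1) θ f + C θ * Dn n θ (derivative f) := by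
  unfold Dn
  rw [Finset.sum_range_succ' (fun k => C ((θ/2)^k / (k.factorial : ℝ)) * (derivative^[2*k] (X * f))),
    Finset.sum_range_succ' (fun k => C ((θ/2)^k / (k.factorial : ℝ)) * (derivative^[2*k] f)),
    mul_add, Finset.mul_sum, Finset.mul_sum]
  simp only [pow_zero, Nat.factorial_zero, Nat.cast_one, Function.iterate_zero_apply]
  have key : ∀ k ∈ Finset.range n,
      C ((θ/2)^(k+1) / ((k+1).factorial : ℝ)) * (derivative^[2*(k+1)] (X * f)) =
        X * (C ((θ/2)^(k+1) / ((k+1).factorial : ℝ)) * (derivative^[2*(k+1)] f)) +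
        C θ * (C ((θ/2)^k / (k.factorial : ℝ)) * (derivative^[2*k] (derivative f))) := by
    intro k _
    have h2 : 2*(k+1) = (2*k+1)+1 := by ring
    rw [h2, iterate_derivative_X_mul' f (2*k+1)]
    have h3 : derivative^[2*k+1] f = derivative^[2*k] (derivative f) :=
      Function.iterate_succ_apply derivative (2*k) f
    rw [h3, mul_add]
    congr 1
    · ring
    · rw [← mul_assoc, ← mul_assoc, ← C_mul, ← C_mul]
      congr 2
      have hfac : (((k+1).factorial : ℝ)) = ((k:ℝ)+1) * (k.factorial : ℝ) := by
        rw [Nat.factorial_succ]; push_cast; ring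
      have hne : ((k:ℝ)+1) ≠ 0 := by positivity
      have hne2 : (k.factorial : ℝ) ≠ 0 := by positivity
      rw [hfac]
      push_cast
      field_simp
      ring
  rw [Finset.sum_congr rfl key, Finset.sum_add_distrib]
  simp only [Nat.mul_zero, Function.iterate_zero_apply, C_1, one_mul]
  ring

lemma sum_coeff_cancel (θ : ℝ) (m : ℕ) :
    ∑ k ∈ Finset.range (m+1),
      (θ/2)^k / (k.factorial : ℝ) * (((-θ)/2)^(m-k) / (((m-k).factorial : ℝ)))
      = (0:ℝ)^m / (m.factorial : ℝ) := by
  have step : ∀ k ∈ Finset.range (m+1),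
      (θ/2)^k / (k.factorial : ℝ) * (((-θ)/2)^(m-k) / (((m-k).factorial : ℝ)))
        = (θ/2)^k * ((-θ)/2)^(m-k) * (m.choose k : ℝ) / (m.factorial : ℝ) := by
    intro k hk
    have hk' : k ≤ m := Nat.lt_succ_iff.mp (Finset.mem_range.mp hk)
    have e : (m.factorial : ℝ) = (m.choose k : ℝ) * k.factorial * (m-k).factorial := by
      exact_mod_cast (Nat.choose_mul_factorial_mul_factorial hk').symm
    have h1 : (k.factorial : ℝ) ≠ 0 := by positivity
    have h2 : ((m-k).factorial : ℝ) ≠ 0 := by positivity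
    have h3 : (m.choose k : ℝ) ≠ 0 := by
      exact_mod_cast Nat.choose_pos hk' |>.ne'
    rw [e]
    field_simp
  rw [Finset.sum_congr rfl step, ← Finset.sum_div, ← add_pow,
    show θ/2 + (-θ)/2 = 0 by ring]

lemma Dop_Dop_neg (θ : ℝ) (g : Polynomial ℝ) : Dop θ (Dop (-θ) g) = g := by
  set n := g.natDegree + 1 with hn
  have h1 : Dop (-θ) g = Dn n (-θ) g := Dop_eq_Dn _ _ (le_refl _)
  have h2 : (Dn n (-θ) g).natDegree + 1 ≤ n :=
    Nat.succ_le_succ (Dn_natDegree_le _ _ _)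
  rw [h1, Dop_eq_Dn (n := n) θ _ h2]
  set F : ℕ × ℕ → Polynomial ℝ := fun p =>
    C ((θ/2)^p.1 / (p.1.factorial : ℝ) * (((-θ)/2)^p.2 / (p.2.factorial : ℝ))) *
      derivative^[2*(p.1+p.2)] g with hF
  have hF0 : ∀ p : ℕ × ℕ, n ≤ p.1 + p.2 → F p = 0 := by
    intro p hp
    rw [hF]
    simp only
    rw [Polynomial.iterate_derivative_eq_zero, mul_zero]
    omega
  have hA : Dn n θ (Dn n (-θ) g) = ∑ p ∈ Finset.range n ×ˢ Finset.range n, F p := by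
    rw [Finset.sum_product]
    unfold Dn
    refine Finset.sum_congr rfl (fun k _ => ?_)
    rw [Polynomial.iterate_derivative_sum, Finset.mul_sum]
    refine Finset.sum_congr rfl (fun l _ => ?_)
    rw [Polynomial.iterate_derivative_C_mul, hF]
    simp only
    rw [show 2*(k+l) = 2*k + 2*l by ring, Function.iterate_add_apply,
      ← mul_assoc, ← C_mul]
  rw [hA]
  have eq1 : ∑ p ∈ Finset.range n ×ˢ Finset.range n, F p
      = ∑ p ∈ Finset.range (2*n) ×ˢ Finset.range (2*n), F p := by
    refine Finset.sum_subset ?_ ?_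
    · intro p hp
      rw [Finset.mem_product, Finset.mem_range, Finset.mem_range] at hp ⊢
      omega
    · intro p _ hnp
      refine hF0 p ?_
      rw [Finset.mem_product, Finset.mem_range, Finset.mem_range] at hnp
      omega
  have eq2 : ∑ p ∈ (Finset.range (2*n-1)).biUnion Finset.HasAntidiagonal.antidiagonal, F p
      = ∑ p ∈ Finset.range (2*n) ×ˢ Finset.range (2*n), F p := by
    refine Finset.sum_subset ?_ ?_
    · intro p hp
      rw [Finset.mem_biUnion] at hp
      obtain ⟨m, hm, hpm⟩ := hp
      rw [Finset.mem_range] at hm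
      rw [Finset.HasAntidiagonal.mem_antidiagonal] at hpm
      rw [Finset.mem_product, Finset.mem_range, Finset.mem_range]
      omega
    · intro p _ hnp
      refine hF0 p ?_
      by_contra hc
      push_neg at hc
      refine hnp (Finset.mem_biUnion.mpr ?_)
      exact ⟨p.1 + p.2, Finset.mem_range.mpr (by omega), Finset.HasAntidiagonal.mem_antidiagonal.mpr rfl⟩
  have hdisj : (↑(Finset.range (2*n-1)) : Set ℕ).PairwiseDisjoint Finset.HasAntidiagonal.antidiagonal := by
    intro a _ b _ hab
    simp only [Function.onFun, Finset.disjoint_left]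
    intro p hpa hpb
    exact hab ((Finset.HasAntidiagonal.mem_antidiagonal.mp hpa).symm.trans (Finset.HasAntidiagonal.mem_antidiagonal.mp hpb))
  rw [eq1, ← eq2, Finset.sum_biUnion hdisj]
  have inner : ∀ m ∈ Finset.range (2*n-1),
      ∑ p ∈ Finset.HasAntidiagonal.antidiagonal m, F p
        = C ((0:ℝ)^m / (m.factorial : ℝ)) * derivative^[2*m] g := by
    intro m _
    rw [Finset.Nat.sum_antidiagonal_eq_sum_range_succ_mk F m]
    have term : ∀ k ∈ Finset.range (m+1),
        F (k, m - k) = C ((θ/2)^k / (k.factorial : ℝ) * (((-θ)/2)^(m-k) / (((m-k).factorial : ℝ)))) *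
          derivative^[2*m] g := by
      intro k hk
      have hk' : k ≤ m := Nat.lt_succ_iff.mp (Finset.mem_range.mp hk)
      rw [hF]
      simp only
      rw [Nat.add_sub_cancel' hk']
    rw [Finset.sum_congr rfl term, ← Finset.sum_mul, ← map_sum, sum_coeff_cancel]
  rw [Finset.sum_congr rfl inner]
  have h2n : 2*n-1 = (2*n-2)+1 := by omega
  rw [h2n, Finset.sum_range_succ'
    (fun m => C ((0:ℝ)^m / (m.factorial : ℝ)) * derivative^[2*m] g)]
  simp

lemma Dop_X_mul (θ : ℝ) (f : Polynomial ℝ) :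
    Dop θ (X * f) = X * Dop θ f + C θ * derivative (Dop θ f) := by
  have hXf : (X * f).natDegree + 1 ≤ f.natDegree + 2 := by
    have := Polynomial.natDegree_mul_le (p := (X : Polynomial ℝ)) (q := f)
    have := Polynomial.natDegree_X_le (R := ℝ)
    omega
  have hf' : (derivative f).natDegree + 1 ≤ f.natDegree + 1 := by
    have := f.natDegree_derivative_le
    omega
  rw [Dop_eq_Dn (n := f.natDegree + 2) θ (X * f) hXf,
    show f.natDegree + 2 = (f.natDegree + 1) + 1 from rfl, Dn_X_mul,
    ← Dop_eq_Dn (n := f.natDegree + 2) θ f (by omega),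
    derivative_Dop,
    ← Dop_eq_Dn (n := f.natDegree + 1) θ (derivative f) hf']

lemma dvd_Dop_X_pow_mul (θ U : ℝ) :
    ∀ (k m : ℕ) (f : Polynomial ℝ), (X - C U)^m ∣ Dop θ f →
      (X - C U)^(m - k) ∣ Dop θ (X^k * f) := by
  intro k
  induction k with
  | zero =>
    intro m f h
    simpa using (pow_dvd_pow (X - C U) (Nat.sub_le m 0)).trans h
  | succ k ih =>
    intro m f h
    have hstep : (X - C U)^(m - k) ∣ Dop θ (X^k * f) := ih m f h
    have hx : X^(k+1) * f = X * (X^k * f) := by ring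
    rw [hx, Dop_X_mul]
    refine dvd_add ?_ ?_
    · exact ((pow_dvd_pow (X - C U) (by omega : m - (k+1) ≤ m - k)).trans hstep).mul_left X
    · have := Polynomial.pow_sub_one_dvd_derivative_of_pow_dvd hstep
      exact ((pow_dvd_pow (X - C U) (by omega : m - (k+1) ≤ m - k - 1)).trans this).mul_left _

/-- For `c = D_{−θ}((X − U)^{2N+1})` and all `k + j ≤ 2N`, the polynomial
`D_θ(X^k · c^{(j)})` vanishes at `U`. -/
theorem stmt18 (N : ℕ) (hN : 1 ≤ N) (θ U : ℝ) :
    ∀ k j : ℕ, k + j ≤ 2*N →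
      (Dop θ (Polynomial.X ^ k *
        Polynomial.derivative^[j]
          (Dop (-θ) ((Polynomial.X - Polynomial.C U) ^ (2*N+1))))).eval U = 0 := by
  intro k j hkj
  set g : Polynomial ℝ := (X - C U) ^ (2*N+1) with hg
  set c : Polynomial ℝ := Dop (-θ) g with hc
  have key : Dop θ (derivative^[j] c) = derivative^[j] g := by
    rw [hc, ← iterate_derivative_Dop, Dop_Dop_neg]
  have hdvd : (X - C U)^(2*N+1-j) ∣ Dop θ (derivative^[j] c) := by
    rw [key, hg]
    exact Polynomial.pow_sub_dvd_iterate_derivative_pow _ _ _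
  have hdvd2 : (X - C U)^(2*N+1-j-k) ∣ Dop θ (X^k * derivative^[j] c) :=
    dvd_Dop_X_pow_mul θ U k (2*N+1-j) _ hdvd
  have hone : (X - C U) ∣ Dop θ (X^k * derivative^[j] c) := by
    refine dvd_trans ?_ hdvd2
    have h1 : 1 ≤ 2*N+1-j-k := by omega
    calc (X - C U) = (X - C U)^1 := (pow_one _).symm
      _ ∣ (X - C U)^(2*N+1-j-k) := pow_dvd_pow _ h1
  have := (Polynomial.dvd_iff_isRoot (p := Dop θ (X^k * derivative^[j] c)) (a := U)).mp hone
  exact this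
end
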